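/- If u is a positive integer and the equation ℓ₁ = ℓ₂ + m·u has T solutions in triples (ℓ₁, ℓ₂, m) ∈ L × L × M with ℓ₁, ℓ₂ coprime to m, then there exists a divisor v of u such that the equation a = b + m·v has at least T / d(u) solutions in triples (a, b, m) with gcd(a, b) = 1, gcd(a,m) = gcd(b,m) = 1, where d(u) is the number of divisors of u. -/

import Mathlib

theorem stmt_16 (L M : Finset ℕ) (hL : ∀ ℓ ∈ L, 0 < ℓ) (hM : ∀ m ∈ M, 0 < m)
    (hcop : ∀ ℓ ∈ L, ∀ m ∈ M, Nat.Coprime ℓ m)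
    (u : ℕ) (hu : 0 < u) (T : ℕ)
    (hT : T = (((L ×ˢ L) ×ˢ M).filter
        (fun t => t.1.1 = t.1.2 + t.2 * u)).card) :
    ∃ v : ℕ, v ∣ u ∧
      (T : ℝ) / u.divisors.card ≤
        ((((Finset.Icc 1 (L.sup id)) ×ˢ (Finset.Icc 1 (L.sup id))) ×ˢ M).filter
          (fun t => t.1.1 = t.1.2 + t.2 * v ∧ Nat.Coprime t.1.1 t.1.2 ∧
            Nat.Coprime t.1.1 t.2 ∧ Nat.Coprime t.1.2 t.2)).card := by
  classical
  set S := (((L ×ˢ L) ×ˢ M).filter (fun t => t.1.1 = t.1.2 + t.2 * u)) with hS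
  have hmem : ∀ t ∈ S, t.1.1 ∈ L ∧ t.1.2 ∈ L ∧ t.2 ∈ M ∧ t.1.1 = t.1.2 + t.2 * u := by
    intro t ht
    simp only [hS, Finset.mem_filter, Finset.mem_product] at ht
    exact ⟨ht.1.1.1, ht.1.1.2, ht.1.2, ht.2⟩
  have hgdvd : ∀ t ∈ S, Nat.gcd t.1.1 t.1.2 ∣ u := by
    intro t ht
    obtain ⟨h1, h2, h3, heq⟩ := hmem t ht
    have hdm : Nat.gcd t.1.1 t.1.2 ∣ t.2 * u := by
      have : Nat.gcd t.1.1 t.1.2 ∣ t.1.2 + t.2 * u := heq ▸ Nat.gcd_dvd_left _ _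
      exact (Nat.dvd_add_right (Nat.gcd_dvd_right _ _)).mp this
    have hcg : Nat.Coprime (Nat.gcd t.1.1 t.1.2) t.2 :=
      Nat.Coprime.coprime_dvd_left (Nat.gcd_dvd_left _ _) (hcop _ h1 _ h3)
    exact (Nat.Coprime.dvd_of_dvd_mul_left hcg) hdm
  have hfib : ∀ t ∈ S, Nat.gcd t.1.1 t.1.2 ∈ u.divisors := by
    intro t ht
    exact Nat.mem_divisors.mpr ⟨hgdvd t ht, hu.ne'⟩
  have hsum : ∑ g ∈ u.divisors, (S.filter (fun t => Nat.gcd t.1.1 t.1.2 = g)).card = T := by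
    rw [hT]
    exact (Finset.card_eq_sum_card_fiberwise hfib).symm
  have hdne : (u.divisors).Nonempty := ⟨1, Nat.one_mem_divisors.mpr hu.ne'⟩
  have hdpos : (0:ℝ) < u.divisors.card := by exact_mod_cast Finset.card_pos.mpr hdne
  have hpig : ∃ g ∈ u.divisors,
      (T : ℝ) / u.divisors.card ≤ (S.filter (fun t => Nat.gcd t.1.1 t.1.2 = g)).card := by
    by_contra h
    push_neg at h
    have : (T : ℝ) < T := by
      calc (T : ℝ)
          = ∑ g ∈ u.divisors, ((S.filter (fun t => Nat.gcd t.1.1 t.1.2 = g)).card : ℝ) := by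
            exact_mod_cast hsum.symm
        _ < ∑ _g ∈ u.divisors, (T : ℝ) / u.divisors.card :=
            Finset.sum_lt_sum_of_nonempty hdne h
        _ = T := by
            rw [Finset.sum_const, nsmul_eq_mul, mul_div_cancel₀]
            exact hdpos.ne'
    exact lt_irrefl _ this
  obtain ⟨g, hgdiv, hgle⟩ := hpig
  obtain ⟨hgu, _⟩ := Nat.mem_divisors.mp hgdiv
  obtain ⟨w, hw⟩ := hgu
  have hgpos : 0 < g := by
    rcases Nat.eq_zero_or_pos g with h0 | h
    · subst h0; simp at hw; omega
    · exact h
  refine ⟨w, Dvd.intro_left g hw.symm, ?_⟩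
  refine le_trans hgle ?_
  have hcard : (S.filter (fun t => Nat.gcd t.1.1 t.1.2 = g)).card ≤
      ((((Finset.Icc 1 (L.sup id)) ×ˢ (Finset.Icc 1 (L.sup id))) ×ˢ M).filter
        (fun t => t.1.1 = t.1.2 + t.2 * w ∧ Nat.Coprime t.1.1 t.1.2 ∧
          Nat.Coprime t.1.1 t.2 ∧ Nat.Coprime t.1.2 t.2)).card := by
    apply Finset.card_le_card_of_injOn (fun t => ((t.1.1 / g, t.1.2 / g), t.2))
    · intro t ht
      rw [Finset.mem_coe, Finset.mem_filter] at ht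
      obtain ⟨htS, htg⟩ := ht
      obtain ⟨h1, h2, h3, heq⟩ := hmem t htS
      have hd1 : g ∣ t.1.1 := htg ▸ Nat.gcd_dvd_left _ _
      have hd2 : g ∣ t.1.2 := htg ▸ Nat.gcd_dvd_right _ _
      obtain ⟨a, ha⟩ := hd1
      obtain ⟨b, hb⟩ := hd2
      have hda : t.1.1 / g = a := by rw [ha]; exact Nat.mul_div_cancel_left a hgpos
      have hdb : t.1.2 / g = b := by rw [hb]; exact Nat.mul_div_cancel_left b hgpos
      have hl1 : 0 < t.1.1 := hL _ h1
      have hl2 : 0 < t.1.2 := hL _ h2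
      have hapos : 0 < a := Nat.pos_of_ne_zero (by rintro rfl; rw [ha] at hl1; simp at hl1)
      have hbpos : 0 < b := Nat.pos_of_ne_zero (by rintro rfl; rw [hb] at hl2; simp at hl2)
      have hale : a ≤ L.sup id :=
        le_trans (ha ▸ Nat.le_mul_of_pos_left a hgpos) (Finset.le_sup (f := id) h1)
      have hble : b ≤ L.sup id :=
        le_trans (hb ▸ Nat.le_mul_of_pos_left b hgpos) (Finset.le_sup (f := id) h2)
      have key : a = b + t.2 * w := by
        have hkey : g * a = g * (b + t.2 * w) := by
          rw [← ha, heq, hb, hw]; ring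
        exact Nat.eq_of_mul_eq_mul_left hgpos hkey
      have hcab : Nat.Coprime a b := by
        have := Nat.coprime_div_gcd_div_gcd (m := t.1.1) (n := t.1.2) (htg ▸ hgpos)
        rwa [htg, hda, hdb] at this
      have hcam : Nat.Coprime a t.2 :=
        Nat.Coprime.coprime_dvd_left ⟨g, by rw [ha]; ring⟩ (hcop _ h1 _ h3)
      have hcbm : Nat.Coprime b t.2 :=
        Nat.Coprime.coprime_dvd_left ⟨g, by rw [hb]; ring⟩ (hcop _ h2 _ h3)
      simp only [Finset.mem_coe, Finset.mem_filter, Finset.mem_product, Finset.mem_Icc, hda, hdb]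
      exact ⟨⟨⟨⟨hapos, hale⟩, ⟨hbpos, hble⟩⟩, h3⟩, key, hcab, hcam, hcbm⟩
    · intro t ht t' ht' himg
      simp only [Finset.mem_coe, Finset.mem_filter] at ht ht'
      have hd1 : g ∣ t.1.1 := ht.2 ▸ Nat.gcd_dvd_left _ _
      have hd2 : g ∣ t.1.2 := ht.2 ▸ Nat.gcd_dvd_right _ _
      have hd1' : g ∣ t'.1.1 := ht'.2 ▸ Nat.gcd_dvd_left _ _
      have hd2' : g ∣ t'.1.2 := ht'.2 ▸ Nat.gcd_dvd_right _ _
      have e1 : t.1.1 / g = t'.1.1 / g := congrArg (fun p => p.1.1) himg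
      have e2 : t.1.2 / g = t'.1.2 / g := congrArg (fun p => p.1.2) himg
      have e3 : t.2 = t'.2 := congrArg (fun p => p.2) himg
      have f1 : t.1.1 = t'.1.1 := by
        rw [← Nat.div_mul_cancel hd1, ← Nat.div_mul_cancel hd1', e1]
      have f2 : t.1.2 = t'.1.2 := by
        rw [← Nat.div_mul_cancel hd2, ← Nat.div_mul_cancel hd2', e2]
      exact Prod.ext (Prod.ext f1 f2) e3
  exact_mod_cast hcard
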